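/- Let Γ be a countable discrete group and f ∈ ℤΓ invertible in ℓ¹(Γ) with inverse w_f^Δ = f⁻¹, and let ξ = η ∘ ρ_{w_f^Δ} : ℓ∞(Γ,ℤ) → X_f. Then for every x ∈ X_f there exists v ∈ ℓ∞(Γ,ℤ) with ξ(v) = x and ‖v‖_∞ ≤ ‖f‖₁/2. -/

import Mathlib

open scoped BigOperators symmDiff Pointwise

noncomputable section

/-- The additive circle `𝕋 = ℝ/ℤ`. -/
abbrev Torus : Type := AddCircle (1 : ℝ)

section GroupDefs

variable {Γ : Type*} [Group Γ]

/-- For `f ∈ ℤΓ`, the map `ρ_f : 𝕋^Γ → 𝕋^Γ`, `(ρ_f x)_{γ'} = Σ_γ f_γ • x_{γ'γ}`. -/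
def rhoT (f : Γ →₀ ℤ) (x : Γ → Torus) : Γ → Torus :=
  fun γ' => f.sum fun γ c => c • x (γ' * γ)

/-- The compact abelian group `X_f = ker ρ_f ⊆ 𝕋^Γ` (as a subset). -/
def XSet (f : Γ →₀ ℤ) : Set (Γ → Torus) := {x | rhoT f x = 0}

/-- The left shift `(λ^γ x)_{γ'} = x_{γ⁻¹ γ'}` on `𝕋^Γ`; restricted to `X_f` this is `α_f^γ`. -/
def lsh (γ : Γ) (x : Γ → Torus) : Γ → Torus := fun γ' => x (γ⁻¹ * γ')

/-- The left shift `(λ^γ w)_{γ'} = w_{γ⁻¹ γ'}` on real-valued functions. -/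
def lshR (γ : Γ) (w : Γ → ℝ) : Γ → ℝ := fun γ' => w (γ⁻¹ * γ')

/-- Expansiveness of the `Γ`-action `α_f` on `X_f`: there is an open neighbourhood `U`
of `0` such that the only point of `X_f` all of whose translates stay in `U` is `0`
(equivalently, `⋂_γ α_f^γ (U ∩ X_f) = {0}`). -/
def ExpansiveAction (f : Γ →₀ ℤ) : Prop :=
  ∃ U : Set (Γ → Torus), IsOpen U ∧ {x | x ∈ XSet f ∧ ∀ γ : Γ, lsh γ x ∈ U} = {0}

/-- `w ∈ ℓ∞(Γ)`: boundedness of a real-valued function. -/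
def Bdd (w : Γ → ℝ) : Prop := ∃ C : ℝ, ∀ γ : Γ, |w γ| ≤ C

/-- `w ∈ ℓ∞(Γ,ℤ)`: all values are integers. -/
def IntValued (w : Γ → ℝ) : Prop := ∀ γ : Γ, ∃ k : ℤ, w γ = (k : ℝ)

/-- For `f ∈ ℤΓ`, the operator `ρ_f` on `ℓ∞(Γ)`: `(ρ_f w)_γ = Σ_{γ'} w_{γγ'} f_{γ'}`. -/
def rhoInf (f : Γ →₀ ℤ) (w : Γ → ℝ) : Γ → ℝ :=
  fun γ => f.sum fun γ' c => (c : ℝ) * w (γ * γ')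

/-- For `h ∈ ℓ¹(Γ)`, the operator `ρ_h` on `ℓ∞(Γ)`: `(ρ_h w)_γ = Σ_{γ'} w_{γγ'} h_{γ'}`. -/
def rhoL1 (h : Γ → ℝ) (w : Γ → ℝ) : Γ → ℝ :=
  fun γ => ∑' γ' : Γ, w (γ * γ') * h γ'

/-- Convolution on `ℓ¹(Γ)`: `(g·h)_γ = Σ_{γ'} g_{γ'} h_{γ'⁻¹γ}`. -/
def conv (g h : Γ → ℝ) : Γ → ℝ := fun γ => ∑' γ' : Γ, g γ' * h (γ'⁻¹ * γ)

/-- Convolution on `ℓ¹(Γ,ℂ)`. -/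
def convC (g h : Γ → ℂ) : Γ → ℂ := fun γ => ∑' γ' : Γ, g γ' * h (γ'⁻¹ * γ)

open Classical in
/-- The unit `δ₁` of the convolution algebra `ℓ¹(Γ)`. -/
def deltaOne : Γ → ℝ := fun γ => if γ = 1 then 1 else 0

open Classical in
/-- The unit `δ₁` of `ℓ¹(Γ,ℂ)`. -/
def deltaOneC : Γ → ℂ := fun γ => if γ = 1 then 1 else 0

/-- `g` is a two-sided convolution inverse of `f` in `ℓ¹(Γ)`. -/
def IsL1Inverse (f g : Γ → ℝ) : Prop :=
  Summable g ∧ conv f g = deltaOne ∧ conv g f = deltaOne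

/-- View `f ∈ ℤΓ` as an element of `ℓ¹(Γ)`. -/
def fR (f : Γ →₀ ℤ) : Γ → ℝ := fun γ => (f γ : ℝ)

/-- View `f ∈ ℤΓ` as an element of `ℓ¹(Γ,ℂ)`. -/
def fCC (f : Γ →₀ ℤ) : Γ → ℂ := fun γ => (f γ : ℂ)

/-- The `ℓ¹`-norm `‖f‖₁` of `f ∈ ℤΓ`. -/
def finsuppL1 (f : Γ →₀ ℤ) : ℝ := f.sum fun _ c => |(c : ℝ)|

/-- The `ℓ¹`-norm of `h ∈ ℓ¹(Γ,ℂ)`. -/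
def l1normC (h : Γ → ℂ) : ℝ := ∑' γ : Γ, ‖h γ‖

/-- Coordinatewise reduction mod 1, `η : ℓ∞(Γ) → 𝕋^Γ`. -/
def etaT (w : Γ → ℝ) : Γ → Torus := fun γ => ((w γ : ℝ) : Torus)

/-- The map `ξ = η ∘ ρ_{w}` for `w ∈ ℓ¹(Γ)`. -/
def xiMap (w : Γ → ℝ) (v : Γ → ℝ) : Γ → Torus := etaT (rhoL1 w v)

/-- A point `x ∈ 𝕋^Γ` is homoclinic if `λ^γ x → 0` along the cofinite filter on `Γ`. -/
def IsHomoclinic (x : Γ → Torus) : Prop :=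
  Filter.Tendsto (fun γ : Γ => lsh γ x) Filter.cofinite (nhds 0)

/-- The set of `Γ'`-fixed points of `α_f` in `X_f`. -/
def FixSet (f : Γ →₀ ℤ) (Γ' : Subgroup Γ) : Set (Γ → Torus) :=
  {x | x ∈ XSet f ∧ ∀ γ ∈ Γ', lsh γ x = x}

/-- Left `(K,ε)`-invariance of a finite set `Q ⊆ Γ`. -/
def LeftInv [DecidableEq Γ] (K : Finset Γ) (ε : ℝ) (Q : Finset Γ) : Prop :=
  ∑ γ ∈ K, (((Q.image fun q => γ * q) ∆ Q).card : ℝ) / (Q.card : ℝ) < ε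

/-- Right `(K,ε)`-invariance of a finite set `Q ⊆ Γ`. -/
def RightInv [DecidableEq Γ] (K : Finset Γ) (ε : ℝ) (Q : Finset Γ) : Prop :=
  ∑ γ ∈ K, (((Q.image fun q => q * γ) ∆ Q).card : ℝ) / (Q.card : ℝ) < ε

/-- Amenability: existence of a left Følner sequence. -/
def Amenable (Γ : Type*) [Group Γ] [DecidableEq Γ] : Prop :=
  ∃ Q : ℕ → Finset Γ, (∀ n, (Q n).Nonempty) ∧
    ∀ (K : Finset Γ) (ε : ℝ), 0 < ε → ∃ N : ℕ, ∀ n ≥ N, LeftInv K ε (Q n)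

/-- Residual finiteness: there is a sequence of finite-index normal subgroups with
trivial intersection. -/
def ResFinite (Γ : Type*) [Group Γ] : Prop :=
  ∃ N : ℕ → Subgroup Γ, (∀ n, (N n).Normal ∧ (N n).FiniteIndex) ∧
    ∀ γ : Γ, (∀ n, γ ∈ N n) → γ = 1

/-- `Q` is a fundamental domain for the coset space `Γ/Γ'`:
`{γQ : γ ∈ Γ'}` is a partition of `Γ`. -/
def IsFundDomain (Γ' : Subgroup Γ) (Q : Finset Γ) : Prop :=
  ∀ x : Γ, ∃! p : Γ × Γ, p.1 ∈ Γ' ∧ p.2 ∈ Q ∧ p.1 * p.2 = x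

/-- `lim_n Γ_n = {1}`: for every finite `K ⊆ Γ` eventually `Γ_n ∩ K⁻¹K = {1}`. -/
def LimTriv (N : ℕ → Subgroup Γ) : Prop :=
  ∀ K : Finset Γ, ∃ M : ℕ, ∀ n ≥ M, ∀ γ ∈ N n, (∃ a ∈ K, ∃ b ∈ K, γ = a⁻¹ * b) → γ = 1

/-- The word ball `B_F(n)` of radius `n` with respect to a generating set `F`. -/
def BallF (F : Finset Γ) (n : ℕ) : Set Γ :=
  {γ | ∃ l : List Γ, l.length ≤ n ∧ (∀ a ∈ l, a ∈ F) ∧ l.prod = γ}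

end GroupDefs

/-- The Hilbert space `ℓ²(Γ,ℂ)`. -/
abbrev H2 (Γ : Type*) : Type _ := lp (fun _ : Γ => ℂ) 2

section Hilbert

variable {Γ : Type*} [Group Γ]

open Classical in
/-- The standard basis vector `δ₁ ∈ ℓ²(Γ,ℂ)`. -/
def deltaL2 : H2 Γ := lp.single 2 (1 : Γ) (1 : ℂ)

/-- `A` is the right-convolution operator `ρ_f` on `ℓ²(Γ,ℂ)`,
`(ρ_f w)_γ = Σ_{γ'} w_{γγ'} f_{γ'}`. -/
def IsRho (f : Γ → ℂ) (A : H2 Γ →L[ℂ] H2 Γ) : Prop :=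
  ∀ (w : H2 Γ) (γ : Γ), (A w : Γ → ℂ) γ = ∑' γ' : Γ, (w : Γ → ℂ) (γ * γ') * f γ'

attribute [local instance] Algebra.complexToReal in
/-- The von Neumann trace of `log (A A*)`, i.e. `tr_{NΓ}(log (A A*)) = (log(AA*) δ₁)(1)`,
where `log` is given by the continuous functional calculus. -/
def trLogAAstar (A : H2 Γ →L[ℂ] H2 Γ) : ℝ :=
  (((cfc Real.log (A * star A)) deltaL2 : Γ → ℂ) (1 : Γ)).re

/-- The Fuglede–Kadison determinant `det_{NΓ} A = exp(½ tr(log (A A*)))`. -/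
def detFK (A : H2 Γ →L[ℂ] H2 Γ) : ℝ := Real.exp (2⁻¹ * trLogAAstar A)

open Classical in
/-- `f^{(n)} : Γ/Γ_n → ℂ`, integration along the fibres: `f^{(n)}(δ) = Σ_{γ ∈ δ} f_γ`. -/
def fQuot (f : Γ → ℂ) (H : Subgroup Γ) : (Γ ⧸ H) → ℂ :=
  fun δ => ∑' γ : Γ, if (QuotientGroup.mk γ : Γ ⧸ H) = δ then f γ else 0

open Classical in
/-- The indicator of the identity coset in `ℓ²(Γ/Γ_n, ℂ)`. -/
def deltaQuot (H : Subgroup Γ) : (Γ ⧸ H) → ℂ :=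
  fun δ => if δ = (QuotientGroup.mk (1 : Γ) : Γ ⧸ H) then 1 else 0

end Hilbert


/-- Auxiliary: a bounded function times an absolutely summable one is summable. -/
lemma aux_summable_mul {Γ : Type*} (w : Γ → ℝ) (hw : Summable fun γ => |w γ|)
    (u : Γ → ℝ) (C : ℝ) (hC : ∀ γ, |u γ| ≤ C) : Summable fun γ => u γ * w γ := by
  rw [← summable_abs_iff]
  refine Summable.of_nonneg_of_le (fun _ => abs_nonneg _) (fun γ => ?_) (hw.mul_left C)
  rw [abs_mul]
  exact mul_le_mul_of_nonneg_right (hC γ) (abs_nonneg _)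

set_option maxHeartbeats 1000000 in
/-- Let `Γ` be a countable discrete group and `f ∈ ℤΓ` invertible in
`ℓ¹(Γ)` with inverse `w = w_f^Δ`, and `ξ = η ∘ ρ_w : ℓ∞(Γ,ℤ) → X_f`. Then for every
`x ∈ X_f` there exists `v ∈ ℓ∞(Γ,ℤ)` with `ξ(v) = x` and `‖v‖_∞ ≤ ‖f‖₁ / 2`. -/
theorem statement4 {Γ : Type*} [Group Γ] [Countable Γ] (f : Γ →₀ ℤ) (w : Γ → ℝ)
    (hw : IsL1Inverse (fR f) w) :
    ∀ x ∈ XSet f, ∃ v : Γ → ℝ, Bdd v ∧ IntValued v ∧ xiMap w v = x ∧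
      ∀ γ : Γ, |v γ| ≤ finsuppL1 f / 2 := by
  obtain ⟨hwsum, _hfw, hwf⟩ := hw
  have hwabs : Summable fun γ => |w γ| := summable_abs_iff.mpr hwsum
  intro x hx
  -- the lift of x with coordinates in [-1/2, 1/2)
  set xt : Γ → ℝ := fun γ => ((AddCircle.equivIco 1 (-(1/2)) (x γ) : ℝ)) with hxt_def
  have hxt_abs : ∀ γ, |xt γ| ≤ 1/2 := by
    intro γ
    have h := (AddCircle.equivIco 1 (-(1/2)) (x γ)).2
    rw [Set.mem_Ico] at h
    rw [abs_le]; constructor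
    · linarith [h.1]
    · linarith [h.2]
  have hxt_coe : ∀ γ, ((xt γ : ℝ) : Torus) = x γ := fun γ =>
    (AddCircle.equivIco 1 (-(1/2))).symm_apply_apply (x γ)
  set v : Γ → ℝ := rhoInf f xt with hv_def
  -- the ℓ∞ bound
  have hbound : ∀ γ : Γ, |v γ| ≤ finsuppL1 f / 2 := by
    intro γ
    have h1 : |v γ| ≤ ∑ γ'' ∈ f.support, |(f γ'' : ℝ)| * (1/2) := by
      refine (Finset.abs_sum_le_sum_abs _ _).trans (Finset.sum_le_sum fun γ'' _ => ?_)
      rw [abs_mul]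
      exact mul_le_mul_of_nonneg_left (hxt_abs _) (abs_nonneg _)
    calc |v γ| ≤ ∑ γ'' ∈ f.support, |(f γ'' : ℝ)| * (1/2) := h1
      _ = (∑ γ'' ∈ f.support, |(f γ'' : ℝ)|) * (1/2) := by rw [Finset.sum_mul]
      _ = finsuppL1 f / 2 := by
          rw [finsuppL1, Finsupp.sum]; ring
  -- integer-valuedness
  have hint : IntValued v := by
    intro γ
    have hcoe : ((v γ : ℝ) : Torus) = rhoT f x γ := by
      show (QuotientAddGroup.mk' (AddSubgroup.zmultiples (1:ℝ)) (v γ)) = rhoT f x γ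
      rw [hv_def, rhoInf, Finsupp.sum, map_sum, rhoT, Finsupp.sum]
      refine Finset.sum_congr rfl fun γ'' _ => ?_
      rw [← zsmul_eq_mul, map_zsmul]
      exact congrArg _ (hxt_coe _)
    rw [hx] at hcoe
    simp only [Pi.zero_apply] at hcoe
    obtain ⟨n, hn⟩ := (AddCircle.coe_eq_zero_iff (1:ℝ)).mp hcoe
    exact ⟨n, by rw [← hn]; simp⟩
  -- summability helpers
  have hsum1 : ∀ (g : Γ), Summable fun γ' : Γ => xt (g * γ') * w γ' :=
    fun g => aux_summable_mul w hwabs _ (1/2) (fun γ' => hxt_abs _)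
  -- the main computation: ρ_w v = xt
  have hkey : ∀ γ : Γ, rhoL1 w v γ = xt γ := by
    intro γ
    have step1 : rhoL1 w v γ
        = ∑' γ' : Γ, ∑ γ'' ∈ f.support, (f γ'' : ℝ) * xt (γ * γ' * γ'') * w γ' := by
      rw [rhoL1]
      refine tsum_congr fun γ' => ?_
      rw [hv_def, rhoInf, Finsupp.sum, Finset.sum_mul]
    have hsummand : ∀ γ'' : Γ, Summable fun γ' : Γ =>
        (f γ'' : ℝ) * xt (γ * γ' * γ'') * w γ' := by
      intro γ''
      have := (aux_summable_mul w hwabs (fun γ' => xt (γ * γ' * γ'')) (1/2)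
        (fun γ' => hxt_abs _)).mul_left ((f γ'' : ℝ))
      simpa [mul_assoc] using this
    have step2 : rhoL1 w v γ
        = ∑ γ'' ∈ f.support, ∑' γ' : Γ, (f γ'' : ℝ) * xt (γ * γ' * γ'') * w γ' := by
      rw [step1]
      exact Summable.tsum_finsetSum fun γ'' _ => hsummand γ''
    -- reindex each inner tsum
    have step3 : ∀ γ'' : Γ, (∑' γ' : Γ, (f γ'' : ℝ) * xt (γ * γ' * γ'') * w γ')
        = ∑' δ : Γ, (f γ'' : ℝ) * xt (γ * δ) * w (δ * γ''⁻¹) := by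
      intro γ''
      rw [← Equiv.tsum_eq (Equiv.mulRight γ''⁻¹)
        (fun γ' => (f γ'' : ℝ) * xt (γ * γ' * γ'') * w γ')]
      refine tsum_congr fun δ => ?_
      simp only [Equiv.coe_mulRight]
      congr 2
      group
    have hsummand2 : ∀ γ'' : Γ, Summable fun δ : Γ =>
        (f γ'' : ℝ) * xt (γ * δ) * w (δ * γ''⁻¹) := by
      intro γ''
      have hw2 : Summable fun δ : Γ => |w (δ * γ''⁻¹)| :=
        (Equiv.mulRight γ''⁻¹).summable_iff.mpr hwabs
      have := (aux_summable_mul (fun δ => w (δ * γ''⁻¹)) hw2 (fun δ => xt (γ * δ)) (1/2)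
        (fun δ => hxt_abs _)).mul_left ((f γ'' : ℝ))
      simpa [mul_assoc] using this
    have step4 : rhoL1 w v γ
        = ∑' δ : Γ, ∑ γ'' ∈ f.support, (f γ'' : ℝ) * xt (γ * δ) * w (δ * γ''⁻¹) := by
      rw [step2, Finset.sum_congr rfl fun γ'' _ => step3 γ'']
      exact (Summable.tsum_finsetSum fun γ'' _ => hsummand2 γ'').symm
    -- identify the inner finite sum with the convolution
    have hconv : ∀ δ : Γ, (∑ γ'' ∈ f.support, (f γ'' : ℝ) * w (δ * γ''⁻¹))
        = conv w (fR f) δ := by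
      intro δ
      have h1 : ∀ γ'' : Γ, (f γ'' : ℝ) * w (δ * γ''⁻¹)
          = w ((((Equiv.inv Γ).trans (Equiv.mulLeft δ)) γ''))
            * fR f ((((Equiv.inv Γ).trans (Equiv.mulLeft δ)) γ'')⁻¹ * δ) := by
        intro γ''
        simp only [Equiv.trans_apply, Equiv.inv_apply, Equiv.coe_mulLeft]
        have h2 : (δ * γ''⁻¹)⁻¹ * δ = γ'' := by group
        rw [h2, mul_comm]
        rfl
      calc ∑ γ'' ∈ f.support, (f γ'' : ℝ) * w (δ * γ''⁻¹)
          = ∑' γ'' : Γ, (f γ'' : ℝ) * w (δ * γ''⁻¹) :=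
            (tsum_eq_sum (fun γ'' hγ'' => by
              simp [Finsupp.notMem_support_iff.mp hγ''])).symm
        _ = ∑' γ'' : Γ, w ((((Equiv.inv Γ).trans (Equiv.mulLeft δ)) γ''))
            * fR f ((((Equiv.inv Γ).trans (Equiv.mulLeft δ)) γ'')⁻¹ * δ) := tsum_congr h1
        _ = ∑' γ' : Γ, w γ' * fR f (γ'⁻¹ * δ) :=
            Equiv.tsum_eq ((Equiv.inv Γ).trans (Equiv.mulLeft δ))
              (fun γ' => w γ' * fR f (γ'⁻¹ * δ))
        _ = conv w (fR f) δ := rfl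
    have step5 : rhoL1 w v γ = ∑' δ : Γ, xt (γ * δ) * deltaOne δ := by
      rw [step4]
      refine tsum_congr fun δ => ?_
      have : ∑ γ'' ∈ f.support, (f γ'' : ℝ) * xt (γ * δ) * w (δ * γ''⁻¹)
          = xt (γ * δ) * ∑ γ'' ∈ f.support, (f γ'' : ℝ) * w (δ * γ''⁻¹) := by
        rw [Finset.mul_sum]
        exact Finset.sum_congr rfl fun γ'' _ => by ring
      rw [this, hconv δ, hwf]
    rw [step5, tsum_eq_single 1 (fun δ hδ => by simp [deltaOne, hδ])]
    simp [deltaOne]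
  refine ⟨v, ⟨finsuppL1 f / 2, hbound⟩, hint, ?_, hbound⟩
  funext γ
  rw [xiMap, etaT]
  rw [hkey γ]
  exact hxt_coe γ

end
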